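/- Let Z = ∑_{j=1}^m ∏_{k≠j} X_k − p_1 s_1 and X = ∏_{j=1}^m X_j(X_j−1) − ∏_{j=1}^m X_j². Then E[Z X] = p_1² ∑_{j=1}^m ∏_{k≠j}(2+μ_k) − p_1 ∑_{j=1}^m (1+μ_j)∏_{k≠j}(1+3μ_k+μ_k²) − p_1² s_1( p_1 − ∏_{j=1}^m(1+μ_j) ). -/

import Mathlib

open MeasureTheory ProbabilityTheory Finset
open scoped NNReal

open scoped ENNReal

/-- The law of `m` independent Poisson random variables `X_j ~ Poisson (μ j)`,
as a product measure on `Fin m → ℕ`. -/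
noncomputable def poissonPi {m : ℕ} (μ : Fin m → ℝ≥0) : Measure (Fin m → ℕ) :=
  Measure.pi fun j => poissonMeasure (μ j)


lemma descFactorial_cast_three (n : ℕ) :
    ((n.descFactorial 3 : ℕ) : ℝ) = (n : ℝ) * ((n : ℝ) - 1) * ((n : ℝ) - 2) := by
  match n with
  | 0 => simp
  | 1 => simp [Nat.descFactorial]
  | (m+2) =>
    simp only [Nat.descFactorial]
    push_cast
    ring

lemma poisson_hasSum_descFactorial (r : ℝ≥0) (k : ℕ) :
    HasSum (fun n => poissonPMFReal r n * (n.descFactorial k : ℝ)) ((r : ℝ) ^ k) := by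
  have hinj : Function.Injective (fun n : ℕ => n + k) := add_left_injective k
  rw [← Function.Injective.hasSum_iff hinj ?_]
  · have h : ∀ n : ℕ, poissonPMFReal r (n + k) * ((n + k).descFactorial k : ℝ)
        = (r : ℝ) ^ k * poissonPMFReal r n := by
      intro n
      have hd : n.factorial * ((n + k).descFactorial k) = (n + k).factorial := by
        have := Nat.factorial_mul_descFactorial (n := n + k) (k := k) (Nat.le_add_left k n)
        simpa [Nat.add_sub_cancel] using this
      have h1 : ((n + k).factorial : ℝ) ≠ 0 := Nat.cast_ne_zero.2 (Nat.factorial_ne_zero _)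
      have h2 : (n.factorial : ℝ) ≠ 0 := Nat.cast_ne_zero.2 (Nat.factorial_ne_zero _)
      have hcast : ((n + k).descFactorial k : ℝ)
          = ((n + k).factorial : ℝ) / (n.factorial : ℝ) := by
        rw [eq_div_iff h2, mul_comm]
        exact_mod_cast congrArg (fun t : ℕ => (t : ℝ)) hd
      unfold poissonPMFReal
      rw [hcast, pow_add]
      field_simp
    have h' : ((fun n => poissonPMFReal r n * (n.descFactorial k : ℝ)) ∘ fun n => n + k)
        = fun n => (r : ℝ) ^ k * poissonPMFReal r n := funext fun n => h n
    rw [h']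
    simpa [poissonPMFReal] using (poissonPMFRealSum r).mul_left ((r : ℝ) ^ k)
  · intro n hn
    have : n < k := by
      by_contra h
      push_neg at h
      exact hn ⟨n - k, by simpa using Nat.sub_add_cancel h⟩
    simp [Nat.descFactorial_eq_zero_iff_lt.2 this]

lemma poisson_integrable_descFactorial (r : ℝ≥0) (k : ℕ) :
    Integrable (fun n => (n.descFactorial k : ℝ)) (poissonMeasure r) := by
  refine ⟨(measurable_of_countable _).aestronglyMeasurable, ?_⟩
  show (∫⁻ n, (‖(n.descFactorial k : ℝ)‖₊ : ℝ≥0∞) ∂(poissonMeasure r)) < ⊤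
  have hli := lintegral_countable' (μ := poissonMeasure r)
    (f := fun n : ℕ => (‖(n.descFactorial k : ℝ)‖₊ : ℝ≥0∞))
  rw [hli]
  have h2 : ∀ n : ℕ, (‖(n.descFactorial k : ℝ)‖₊ : ℝ≥0∞) * poissonMeasure r {n}
      = ENNReal.ofReal (poissonPMFReal r n * (n.descFactorial k : ℝ)) := by
    intro n
    rw [poissonMeasure_singleton]
    change _ * ENNReal.ofReal (poissonPMFReal r n) = _
    rw [ENNReal.ofReal_mul poissonPMFReal_nonneg,
      ← enorm_eq_nnnorm, Real.enorm_eq_ofReal (by positivity)]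
    ring
  simp only [h2]
  rw [← ENNReal.ofReal_tsum_of_nonneg
    (fun n => mul_nonneg poissonPMFReal_nonneg (by positivity))
    (poisson_hasSum_descFactorial r k).summable]
  exact ENNReal.ofReal_lt_top

lemma poisson_integral_descFactorial (r : ℝ≥0) (k : ℕ) :
    ∫ n, (n.descFactorial k : ℝ) ∂(poissonMeasure r) = (r : ℝ) ^ k := by
  rw [integral_poissonMeasure' (poisson_integrable_descFactorial r k)]
  have h : ∀ n : ℕ, (poissonPMF r n).toReal = poissonPMFReal r n := by
    intro n
    have hp : poissonPMF r n = ENNReal.ofReal (poissonPMFReal r n) := rfl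
    rw [hp]
    exact ENNReal.toReal_ofReal poissonPMFReal_nonneg
  simp only [smul_eq_mul, h]
  exact (poisson_hasSum_descFactorial r k).tsum_eq

lemma poisson_integrable_poly (r : ℝ≥0) (f : ℕ → ℝ) (c : Fin 4 → ℝ)
    (hf : ∀ n : ℕ, f n = ∑ i : Fin 4, c i * (n.descFactorial (i : ℕ) : ℝ)) :
    Integrable f (poissonMeasure r) := by
  have : f = fun n : ℕ => ∑ i : Fin 4, c i * (n.descFactorial (i : ℕ) : ℝ) := funext hf
  rw [this]
  exact integrable_finset_sum _
    (fun i _ => (poisson_integrable_descFactorial r (i : ℕ)).const_mul (c i))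

lemma poisson_integral_poly (r : ℝ≥0) (f : ℕ → ℝ) (c : Fin 4 → ℝ)
    (hf : ∀ n : ℕ, f n = ∑ i : Fin 4, c i * (n.descFactorial (i : ℕ) : ℝ)) :
    ∫ n, f n ∂(poissonMeasure r)
      = c 0 + c 1 * (r : ℝ) + c 2 * (r : ℝ) ^ 2 + c 3 * (r : ℝ) ^ 3 := by
  have hrepl : f = fun n : ℕ => ∑ i : Fin 4, c i * (n.descFactorial (i : ℕ) : ℝ) := funext hf
  rw [hrepl, integral_finset_sum (univ : Finset (Fin 4))
    (f := fun (i : Fin 4) (n : ℕ) => c i * (n.descFactorial (i : ℕ) : ℝ))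
    (fun i _ => (poisson_integrable_descFactorial r (i : ℕ)).const_mul (c i))]
  simp only [integral_const_mul, poisson_integral_descFactorial]
  rw [Fin.sum_univ_four]
  norm_num [show ((0 : Fin 4) : ℕ) = 0 from rfl, show ((1 : Fin 4) : ℕ) = 1 from rfl,
    show ((2 : Fin 4) : ℕ) = 2 from rfl, show ((3 : Fin 4) : ℕ) = 3 from rfl]

noncomputable section PoissonAux

def g1 : ℕ → ℝ := fun n => (n : ℝ) * ((n : ℝ) - 1)
def g2 : ℕ → ℝ := fun n => (n : ℝ) ^ 2
def g3 : ℕ → ℝ := fun n => (n : ℝ) ^ 2 * ((n : ℝ) - 1)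
def g4 : ℕ → ℝ := fun n => (n : ℝ) ^ 3

def aF {m : ℕ} (j l : Fin m) : ℕ → ℝ := if l = j then g1 else g3
def bF {m : ℕ} (j l : Fin m) : ℕ → ℝ := if l = j then g2 else g4

lemma finzero : ((0 : Fin 4) : ℕ) = 0 := rfl
lemma finone : ((1 : Fin 4) : ℕ) = 1 := rfl
lemma fintwo : ((2 : Fin 4) : ℕ) = 2 := rfl
lemma finthree : ((3 : Fin 4) : ℕ) = 3 := rfl

lemma g1_rep (n : ℕ) : g1 n = ∑ i : Fin 4, (![0,0,1,0] : Fin 4 → ℝ) i * (n.descFactorial (i : ℕ) : ℝ) := by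
  rw [Fin.sum_univ_four, finzero, finone, fintwo, finthree, Nat.descFactorial_zero,
    Nat.descFactorial_one, Nat.cast_descFactorial_two, descFactorial_cast_three]
  simp only [Matrix.cons_val_zero, Matrix.cons_val_one, Matrix.head_cons, Matrix.cons_val, Nat.cast_one, g1]
  norm_num
  try ring

lemma g2_rep (n : ℕ) : g2 n = ∑ i : Fin 4, (![0,1,1,0] : Fin 4 → ℝ) i * (n.descFactorial (i : ℕ) : ℝ) := by
  rw [Fin.sum_univ_four, finzero, finone, fintwo, finthree, Nat.descFactorial_zero,
    Nat.descFactorial_one, Nat.cast_descFactorial_two, descFactorial_cast_three]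
  simp only [Matrix.cons_val_zero, Matrix.cons_val_one, Matrix.head_cons, Matrix.cons_val, Nat.cast_one, g2]
  norm_num
  try ring

lemma g3_rep (n : ℕ) : g3 n = ∑ i : Fin 4, (![0,0,2,1] : Fin 4 → ℝ) i * (n.descFactorial (i : ℕ) : ℝ) := by
  rw [Fin.sum_univ_four, finzero, finone, fintwo, finthree, Nat.descFactorial_zero,
    Nat.descFactorial_one, Nat.cast_descFactorial_two, descFactorial_cast_three]
  simp only [Matrix.cons_val_zero, Matrix.cons_val_one, Matrix.head_cons, Matrix.cons_val, Nat.cast_one, g3]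
  norm_num
  try ring

lemma g4_rep (n : ℕ) : g4 n = ∑ i : Fin 4, (![0,1,3,1] : Fin 4 → ℝ) i * (n.descFactorial (i : ℕ) : ℝ) := by
  rw [Fin.sum_univ_four, finzero, finone, fintwo, finthree, Nat.descFactorial_zero,
    Nat.descFactorial_one, Nat.cast_descFactorial_two, descFactorial_cast_three]
  simp only [Matrix.cons_val_zero, Matrix.cons_val_one, Matrix.head_cons, Matrix.cons_val, Nat.cast_one, g4]
  norm_num
  try ring

lemma int_g1 (r : ℝ≥0) : Integrable g1 (poissonMeasure r) := poisson_integrable_poly r g1 _ g1_rep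
lemma int_g2 (r : ℝ≥0) : Integrable g2 (poissonMeasure r) := poisson_integrable_poly r g2 _ g2_rep
lemma int_g3 (r : ℝ≥0) : Integrable g3 (poissonMeasure r) := poisson_integrable_poly r g3 _ g3_rep
lemma int_g4 (r : ℝ≥0) : Integrable g4 (poissonMeasure r) := poisson_integrable_poly r g4 _ g4_rep

lemma IG1 (r : ℝ≥0) : ∫ n, g1 n ∂(poissonMeasure r) = (r : ℝ) ^ 2 := by
  rw [poisson_integral_poly r g1 _ g1_rep]; simp only [Matrix.cons_val]; norm_num
lemma IG2 (r : ℝ≥0) : ∫ n, g2 n ∂(poissonMeasure r) = (r : ℝ) * (1 + (r : ℝ)) := by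
  rw [poisson_integral_poly r g2 _ g2_rep]; simp only [Matrix.cons_val]; norm_num; ring
lemma IG3 (r : ℝ≥0) : ∫ n, g3 n ∂(poissonMeasure r) = (r : ℝ) ^ 2 * (2 + (r : ℝ)) := by
  rw [poisson_integral_poly r g3 _ g3_rep]; simp only [Matrix.cons_val]; norm_num; ring
lemma IG4 (r : ℝ≥0) : ∫ n, g4 n ∂(poissonMeasure r) = (r : ℝ) * (1 + 3 * (r : ℝ) + (r : ℝ) ^ 2) := by
  rw [poisson_integral_poly r g4 _ g4_rep]; simp only [Matrix.cons_val]; norm_num; ring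

lemma int_aF {m : ℕ} (r : ℝ≥0) (j l : Fin m) : Integrable (aF j l) (poissonMeasure r) := by
  unfold aF; split
  · exact int_g1 r
  · exact int_g3 r

lemma int_bF {m : ℕ} (r : ℝ≥0) (j l : Fin m) : Integrable (bF j l) (poissonMeasure r) := by
  unfold bF; split
  · exact int_g2 r
  · exact int_g4 r

lemma integral_poissonPi_prod {m : ℕ} (μ : Fin m → ℝ≥0) (f : Fin m → ℕ → ℝ) :
    ∫ x : Fin m → ℕ, ∏ i, f i (x i) ∂(poissonPi μ)
      = ∏ i, ∫ n, f i n ∂(poissonMeasure (μ i)) :=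
  @MeasureTheory.integral_fin_nat_prod_eq_prod ℝ _ m (fun _ => ℕ)
    (fun _ => inferInstance) (fun i => poissonMeasure (μ i))
    (fun i => inferInstanceAs (SigmaFinite (poissonMeasure (μ i)))) f

lemma integrable_poissonPi_prod {m : ℕ} (μ : Fin m → ℝ≥0) (f : Fin m → ℕ → ℝ)
    (hf : ∀ i, Integrable (f i) (poissonMeasure (μ i))) :
    Integrable (fun x : Fin m → ℕ => ∏ i, f i (x i)) (poissonPi μ) :=
  @MeasureTheory.Integrable.fin_nat_prod ℝ _ m (fun _ => ℕ)
    (fun _ => inferInstance) (fun i => poissonMeasure (μ i))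
    (fun i => inferInstanceAs (SigmaFinite (poissonMeasure (μ i)))) f hf

end PoissonAux

section PerJ

variable {m : ℕ} (μ : Fin m → ℝ≥0)

lemma intA (j : Fin m) :
    ∫ x : Fin m → ℕ, ∏ l, aF j l (x l) ∂(poissonPi μ)
      = (∏ l, (μ l : ℝ)) ^ 2 * ∏ k ∈ univ.erase j, (2 + (μ k : ℝ)) := by
  rw [integral_poissonPi_prod]
  rw [← Finset.mul_prod_erase univ (fun l => ∫ n, aF j l n ∂(poissonMeasure (μ l)))
    (mem_univ j)]
  have h1 : (∫ n, aF j j n ∂(poissonMeasure (μ j))) = (μ j : ℝ) ^ 2 := by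
    rw [show aF j j = g1 by simp [aF]]; exact IG1 (μ j)
  have h2 : ∏ k ∈ univ.erase j, (∫ n, aF j k n ∂(poissonMeasure (μ k)))
      = ∏ k ∈ univ.erase j, ((μ k : ℝ) ^ 2 * (2 + (μ k : ℝ))) := by
    refine Finset.prod_congr rfl fun k hk => ?_
    rw [show aF j k = g3 by simp [aF, Finset.ne_of_mem_erase hk]]
    exact IG3 (μ k)
  rw [h1, h2, Finset.prod_mul_distrib, ← mul_assoc,
    show (μ j : ℝ) ^ 2 * ∏ k ∈ univ.erase j, (μ k : ℝ) ^ 2 = ∏ l, (μ l : ℝ) ^ 2 from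
      Finset.mul_prod_erase univ (fun l => (μ l : ℝ) ^ 2) (mem_univ j),
    Finset.prod_pow]

lemma intB (j : Fin m) :
    ∫ x : Fin m → ℕ, ∏ l, bF j l (x l) ∂(poissonPi μ)
      = (∏ l, (μ l : ℝ)) * ((1 + (μ j : ℝ))
          * ∏ k ∈ univ.erase j, (1 + 3 * (μ k : ℝ) + (μ k : ℝ) ^ 2)) := by
  rw [integral_poissonPi_prod]
  rw [← Finset.mul_prod_erase univ (fun l => ∫ n, bF j l n ∂(poissonMeasure (μ l)))
    (mem_univ j)]
  have h1 : (∫ n, bF j j n ∂(poissonMeasure (μ j))) = (μ j : ℝ) * (1 + (μ j : ℝ)) := by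
    rw [show bF j j = g2 by simp [bF]]; exact IG2 (μ j)
  have h2 : ∏ k ∈ univ.erase j, (∫ n, bF j k n ∂(poissonMeasure (μ k)))
      = ∏ k ∈ univ.erase j, ((μ k : ℝ) * (1 + 3 * (μ k : ℝ) + (μ k : ℝ) ^ 2)) := by
    refine Finset.prod_congr rfl fun k hk => ?_
    rw [show bF j k = g4 by simp [bF, Finset.ne_of_mem_erase hk]]
    exact IG4 (μ k)
  rw [h1, h2, Finset.prod_mul_distrib,
    show ∀ A B C D : ℝ, A * B * (C * D) = (A * C) * (B * D) from fun A B C D => by ring,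
    show (μ j : ℝ) * ∏ k ∈ univ.erase j, (μ k : ℝ) = ∏ l, (μ l : ℝ) from
      Finset.mul_prod_erase univ (fun l => (μ l : ℝ)) (mem_univ j)]

lemma intC :
    ∫ x : Fin m → ℕ, ∏ l, g1 (x l) ∂(poissonPi μ) = (∏ l, (μ l : ℝ)) ^ 2 := by
  rw [integral_poissonPi_prod (f := fun _ => g1)]
  rw [Finset.prod_congr rfl fun l _ => IG1 (μ l), Finset.prod_pow]

lemma intD :
    ∫ x : Fin m → ℕ, ∏ l, g2 (x l) ∂(poissonPi μ)
      = (∏ l, (μ l : ℝ)) * ∏ l, (1 + (μ l : ℝ)) := by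
  rw [integral_poissonPi_prod (f := fun _ => g2)]
  rw [Finset.prod_congr rfl fun l _ => IG2 (μ l), Finset.prod_mul_distrib]

end PerJ

theorem expectation_Z_X (m : ℕ) (hm : 2 ≤ m) (μ : Fin m → ℝ≥0) (hμ : ∀ j, 0 < μ j) :
    ∫ x : Fin m → ℕ, (∑ j, (∏ k ∈ univ.erase j, (x k : ℝ)) - (∏ j, (μ j : ℝ)) * ∑ j, ((μ j : ℝ))⁻¹) * (∏ j, ((x j : ℝ) * ((x j : ℝ) - 1)) - ∏ j, (x j : ℝ) ^ 2) ∂(poissonPi μ)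
      = (∏ j, (μ j : ℝ)) ^ 2 * ∑ j, ∏ k ∈ univ.erase j, (2 + (μ k : ℝ)) - (∏ j, (μ j : ℝ)) * ∑ j, (1 + (μ j : ℝ)) * ∏ k ∈ univ.erase j, (1 + 3 * (μ k : ℝ) + (μ k : ℝ) ^ 2) - (∏ j, (μ j : ℝ)) ^ 2 * (∑ j, ((μ j : ℝ))⁻¹) * ((∏ j, (μ j : ℝ)) - ∏ j, (1 + (μ j : ℝ))) := by
  set c : ℝ := (∏ j, (μ j : ℝ)) * ∑ j, ((μ j : ℝ))⁻¹ with hc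
  have hpt : (fun x : Fin m → ℕ =>
      (∑ j, (∏ k ∈ univ.erase j, (x k : ℝ)) - (∏ j, (μ j : ℝ)) * ∑ j, ((μ j : ℝ))⁻¹)
        * (∏ j, ((x j : ℝ) * ((x j : ℝ) - 1)) - ∏ j, (x j : ℝ) ^ 2))
      = fun x : Fin m → ℕ =>
        ((∑ j, ∏ l, aF j l (x l)) - (∑ j, ∏ l, bF j l (x l)) - c * ∏ l, g1 (x l))
          + c * ∏ l, g2 (x l) := by
    funext x
    have hA : ∀ j : Fin m,
        (∏ k ∈ univ.erase j, ((x k : ℝ))) * (∏ l, g1 (x l)) = ∏ l, aF j l (x l) := by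
      intro j
      rw [← Finset.mul_prod_erase univ (fun l => g1 (x l)) (mem_univ j),
          ← Finset.mul_prod_erase univ (fun l => aF j l (x l)) (mem_univ j)]
      have h1 : aF j j = g1 := by simp [aF]
      have h2 : ∏ l ∈ univ.erase j, aF j l (x l)
          = ∏ l ∈ univ.erase j, ((x l : ℝ) * g1 (x l)) := by
        refine Finset.prod_congr rfl fun l hl => ?_
        rw [show aF j l = g3 by simp [aF, Finset.ne_of_mem_erase hl]]
        simp only [g1, g3]; ring
      rw [h1, h2, Finset.prod_mul_distrib]
      ring
    have hB : ∀ j : Fin m,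
        (∏ k ∈ univ.erase j, ((x k : ℝ))) * (∏ l, g2 (x l)) = ∏ l, bF j l (x l) := by
      intro j
      rw [← Finset.mul_prod_erase univ (fun l => g2 (x l)) (mem_univ j),
          ← Finset.mul_prod_erase univ (fun l => bF j l (x l)) (mem_univ j)]
      have h1 : bF j j = g2 := by simp [bF]
      have h2 : ∏ l ∈ univ.erase j, bF j l (x l)
          = ∏ l ∈ univ.erase j, ((x l : ℝ) * g2 (x l)) := by
        refine Finset.prod_congr rfl fun l hl => ?_
        rw [show bF j l = g4 by simp [bF, Finset.ne_of_mem_erase hl]]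
        simp only [g2, g4]; ring
      rw [h1, h2, Finset.prod_mul_distrib]
      ring
    have hC : (∏ j, ((x j : ℝ) * ((x j : ℝ) - 1))) = ∏ l, g1 (x l) := rfl
    have hD : (∏ j, ((x j : ℝ) ^ 2)) = ∏ l, g2 (x l) := rfl
    rw [hC, hD, ← hc, sub_mul, Finset.sum_mul]
    rw [Finset.sum_congr rfl fun j _ => (by rw [mul_sub, hA j, hB j] :
      (∏ k ∈ univ.erase j, ((x k : ℝ))) * ((∏ l, g1 (x l)) - ∏ l, g2 (x l))
        = (∏ l, aF j l (x l)) - ∏ l, bF j l (x l))]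
    rw [Finset.sum_sub_distrib]
    ring
  rw [hpt]
  have IAj : ∀ j : Fin m, Integrable (fun x : Fin m → ℕ => ∏ l, aF j l (x l)) (poissonPi μ) :=
    fun j => integrable_poissonPi_prod μ _ (fun l => int_aF (μ l) j l)
  have IBj : ∀ j : Fin m, Integrable (fun x : Fin m → ℕ => ∏ l, bF j l (x l)) (poissonPi μ) :=
    fun j => integrable_poissonPi_prod μ _ (fun l => int_bF (μ l) j l)
  have ISA : Integrable (fun x : Fin m → ℕ => ∑ j, ∏ l, aF j l (x l)) (poissonPi μ) :=
    integrable_finset_sum _ (fun j _ => IAj j)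
  have ISB : Integrable (fun x : Fin m → ℕ => ∑ j, ∏ l, bF j l (x l)) (poissonPi μ) :=
    integrable_finset_sum _ (fun j _ => IBj j)
  have IC : Integrable (fun x : Fin m → ℕ => ∏ l, g1 (x l)) (poissonPi μ) :=
    integrable_poissonPi_prod μ _ (fun l => int_g1 (μ l))
  have ID : Integrable (fun x : Fin m → ℕ => ∏ l, g2 (x l)) (poissonPi μ) :=
    integrable_poissonPi_prod μ _ (fun l => int_g2 (μ l))
  have IC' : Integrable (fun x : Fin m → ℕ => c * ∏ l, g1 (x l)) (poissonPi μ) :=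
    IC.const_mul c
  have ID' : Integrable (fun x : Fin m → ℕ => c * ∏ l, g2 (x l)) (poissonPi μ) :=
    ID.const_mul c
  have ISAB : Integrable (fun x : Fin m → ℕ =>
      (∑ j, ∏ l, aF j l (x l)) - ∑ j, ∏ l, bF j l (x l)) (poissonPi μ) := ISA.sub ISB
  have ISABC : Integrable (fun x : Fin m → ℕ =>
      (∑ j, ∏ l, aF j l (x l)) - (∑ j, ∏ l, bF j l (x l)) - c * ∏ l, g1 (x l))
      (poissonPi μ) := ISAB.sub IC'
  rw [integral_add ISABC ID', integral_sub ISAB IC', integral_sub ISA ISB,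
    integral_finset_sum _ (fun j _ => IAj j), integral_finset_sum _ (fun j _ => IBj j),
    integral_const_mul, integral_const_mul, intC, intD]
  rw [Finset.sum_congr rfl fun j _ => intA μ j, Finset.sum_congr rfl fun j _ => intB μ j]
  rw [← Finset.mul_sum, ← Finset.mul_sum, hc]
  ring
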